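/- With the notation of the previous statement, let A be the (J−1)×(J−1) matrix with entries A_{ij} = L_j''(x_i) (the collocation second-derivative matrix with homogeneous Dirichlet boundary conditions). Then for every nonzero vector β ∈ ℝ^{J−1}, β^T D² A β < 0, where D² = diag(α_1,...,α_{J−1}); consequently D A D^{-1} is symmetric negative definite and all eigenvalues of A are real and negative. -/

import Mathlib

open Finset Polynomial Matrix

/-- The `i`-th interior node index: `i ↦ i+1` as an element of `Fin (J+1)`. -/
def interiorIdx (J : ℕ) (i : Fin (J-1)) : Fin (J+1) :=
  ⟨i.1 + 1, by have := i.2; omega⟩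

lemma cmn_poly_ftc (q : Polynomial ℝ) (a b : ℝ) :
    (∫ t in a..b, (derivative q).eval t) = q.eval b - q.eval a := by
  apply intervalIntegral.integral_deriv_eq_sub' (fun t : ℝ => q.eval t)
    (funext fun t : ℝ => Polynomial.deriv (p := q))
  · intro t _; exact q.differentiableAt
  · exact (q.derivative.continuous).continuousOn

lemma cmn_poly_ibp (u w : Polynomial ℝ) (a b : ℝ)
    (hwa : w.eval a = 0) (hwb : w.eval b = 0) :
    (∫ t in a..b, (derivative (derivative u) * w).eval t)
      = - ∫ t in a..b, (derivative u * derivative w).eval t := by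
  have h1 := cmn_poly_ftc (derivative u * w) a b
  rw [Polynomial.derivative_mul] at h1
  have h2 : (∫ t in a..b,
        ((derivative (derivative u) * w).eval t + (derivative u * derivative w).eval t))
      = (∫ t in a..b, (derivative (derivative u) * w).eval t)
        + ∫ t in a..b, (derivative u * derivative w).eval t :=
    intervalIntegral.integral_add
      ((Polynomial.continuous _).intervalIntegrable _ _)
      ((Polynomial.continuous _).intervalIntegrable _ _)
  simp only [Polynomial.eval_add] at h1
  rw [h2] at h1
  simp only [Polynomial.eval_mul, hwa, hwb, mul_zero] at h1 ⊢
  linarith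

lemma cmn_poly_sq_pos (g : Polynomial ℝ) (hg : g ≠ 0) (a b : ℝ) (hab : a < b) :
    0 < ∫ t in a..b, g.eval t * g.eval t := by
  obtain ⟨c, hc⟩ := ((Set.Icc_infinite hab).diff (g.finite_setOf_isRoot hg)).nonempty
  apply intervalIntegral.integral_pos hab
  · exact ((g.continuous).mul g.continuous).continuousOn
  · intro t _; exact mul_self_nonneg _
  · exact ⟨c, hc.1, mul_self_pos.mpr hc.2⟩

lemma cmn_sum_interior {J : ℕ} (h : Fin (J+1) → ℝ)
    (h0 : h 0 = 0) (hl : h (Fin.last J) = 0) :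
    ∑ k : Fin (J+1), h k = ∑ i : Fin (J-1), h (interiorIdx J i) := by
  rw [← Finset.sum_image (f := h) (g := interiorIdx J)
    (fun i _ j _ hij => by
      have := congrArg Fin.val hij
      exact Fin.ext (by simpa [interiorIdx] using this))]
  refine (Finset.sum_subset (Finset.subset_univ _) ?_).symm
  intro k _ hk
  have hk0 : k.1 = 0 ∨ k.1 = J := by
    by_contra hcon
    push_neg at hcon
    apply hk
    refine Finset.mem_image.mpr ⟨⟨k.1 - 1, by have := k.2; omega⟩, Finset.mem_univ _, ?_⟩
    apply Fin.ext
    show k.1 - 1 + 1 = k.1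
    omega
  rcases hk0 with h' | h'
  · rw [show k = 0 from Fin.ext (by simpa using h'), h0]
  · rw [show k = Fin.last J from Fin.ext (by simpa using h'), hl]

theorem collocation_matrix_negative (J : ℕ) (hJ : 2 ≤ J)
    (x : Fin (J+1) → ℝ) (hx : StrictMono x)
    (α : Fin (J+1) → ℝ) (hα : ∀ k, 0 < α k)
    (hexact : ∀ P : Polynomial ℝ, P.natDegree ≤ 2*J - 1 →
      (∫ t in (x 0)..(x (Fin.last J)), P.eval t) = ∑ k : Fin (J+1), α k * P.eval (x k))
    (A : Matrix (Fin (J-1)) (Fin (J-1)) ℝ)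
    (hA : ∀ i j, A i j =
      (derivative (derivative (Lagrange.basis univ x (interiorIdx J j)))).eval
        (x (interiorIdx J i))) :
    (∀ β : Fin (J-1) → ℝ, β ≠ 0 →
        β ⬝ᵥ (Matrix.diagonal (fun i => α (interiorIdx J i)) * A).mulVec β < 0) ∧
      ((Matrix.diagonal (fun i => Real.sqrt (α (interiorIdx J i))) * A *
          (Matrix.diagonal (fun i => Real.sqrt (α (interiorIdx J i))))⁻¹).IsSymm ∧
        (-(Matrix.diagonal (fun i => Real.sqrt (α (interiorIdx J i))) * A *
          (Matrix.diagonal (fun i => Real.sqrt (α (interiorIdx J i))))⁻¹)).PosDef) ∧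
      ∀ μ ∈ spectrum ℂ (A.map (Complex.ofReal)), μ.im = 0 ∧ μ.re < 0 := by
  have hab : x 0 < x (Fin.last J) := hx (by rw [Fin.lt_def]; simp [Fin.last]; omega)
  have hxinj : Set.InjOn x ↑(univ : Finset (Fin (J+1))) := hx.injective.injOn
  have hLdeg : ∀ k, (Lagrange.basis univ x k).natDegree = J := fun k => by
    rw [Lagrange.natDegree_basis hxinj (mem_univ _)]; simp
  have hLself : ∀ k, (Lagrange.basis univ x k).eval (x k) = 1 := fun k =>
    Lagrange.eval_basis_self hxinj (mem_univ k)
  have hLne : ∀ k m : Fin (J+1), k ≠ m → (Lagrange.basis univ x k).eval (x m) = 0 :=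
    fun k m hkm => Lagrange.eval_basis_of_ne hkm (mem_univ m)
  have hIinj : Function.Injective (interiorIdx J) := fun i j hij =>
    Fin.ext (by have := congrArg Fin.val hij; simpa [interiorIdx] using this)
  have hIne0 : ∀ i : Fin (J-1), interiorIdx J i ≠ 0 := fun i h =>
    by have := congrArg Fin.val h; simp [interiorIdx] at this
  have hInel : ∀ i : Fin (J-1), interiorIdx J i ≠ Fin.last J := fun i h => by
    have := congrArg Fin.val h
    have h2 := i.2
    simp [interiorIdx, Fin.last] at this
    omega
  -- key quadrature identity
  have key : ∀ u : Polynomial ℝ, u.natDegree ≤ J → ∀ i : Fin (J-1),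
      α (interiorIdx J i) * (derivative (derivative u)).eval (x (interiorIdx J i))
        = - ∫ t in (x 0)..(x (Fin.last J)),
            (derivative u).eval t * (derivative (Lagrange.basis univ x (interiorIdx J i))).eval t := by
    intro u hu i
    have hdeg : (derivative (derivative u) * Lagrange.basis univ x (interiorIdx J i)).natDegree ≤ 2*J - 1 := by
      refine (Polynomial.natDegree_mul_le).trans ?_
      have h1 : (derivative (derivative u)).natDegree ≤ J - 1 - 1 :=
        (Polynomial.natDegree_derivative_le _).trans
          (Nat.sub_le_sub_right ((Polynomial.natDegree_derivative_le _).trans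
            (Nat.sub_le_sub_right hu 1)) 1)
      rw [hLdeg]
      omega
    have h1 := hexact _ hdeg
    have h2 : ∑ k : Fin (J+1), α k * (derivative (derivative u) * Lagrange.basis univ x (interiorIdx J i)).eval (x k)
        = α (interiorIdx J i) * (derivative (derivative u)).eval (x (interiorIdx J i)) := by
      rw [cmn_sum_interior _
        (by simp [Polynomial.eval_mul, hLne _ _ (hIne0 i)])
        (by simp [Polynomial.eval_mul, hLne _ _ (hInel i)])]
      rw [Finset.sum_eq_single i]
      · simp [Polynomial.eval_mul, hLself]
      · intro m _ hmi
        have : (Lagrange.basis univ x (interiorIdx J i)).eval (x (interiorIdx J m)) = 0 :=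
          hLne _ _ (fun hh => hmi (hIinj hh.symm))
        simp [Polynomial.eval_mul, this]
      · intro hmem; exact absurd (mem_univ i) hmem
    have h3 := cmn_poly_ibp u (Lagrange.basis univ x (interiorIdx J i)) (x 0) (x (Fin.last J))
      (hLne _ _ (hIne0 i)) (hLne _ _ (hInel i))
    rw [← h2, ← h1, h3]
    congr 1
    refine intervalIntegral.integral_congr fun t _ => ?_
    simp [Polynomial.eval_mul]
  -- symmetry of diag(α) * A
  have hsym : ∀ i j, α (interiorIdx J i) * A i j = α (interiorIdx J j) * A j i := by
    intro i j
    rw [hA i j, hA j i]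
    have e1 := key (Lagrange.basis univ x (interiorIdx J j)) (hLdeg _).le i
    have e2 := key (Lagrange.basis univ x (interiorIdx J i)) (hLdeg _).le j
    rw [e1, e2]
    congr 1
    exact intervalIntegral.integral_congr fun t _ => mul_comm _ _
  -- Part 1: negativity of the quadratic form
  have part1 : ∀ β : Fin (J-1) → ℝ, β ≠ 0 →
      β ⬝ᵥ (Matrix.diagonal (fun i => α (interiorIdx J i)) * A).mulVec β < 0 := by
    intro β hβ
    set p : Polynomial ℝ :=
      ∑ j : Fin (J-1), C (β j) * Lagrange.basis univ x (interiorIdx J j) with hpdef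
    have hpdeg : p.natDegree ≤ J :=
      Polynomial.natDegree_sum_le_of_forall_le _ _ fun j _ =>
        (Polynomial.natDegree_C_mul_le _ _).trans (hLdeg _).le
    have hpev : ∀ i, p.eval (x (interiorIdx J i)) = β i := by
      intro i
      rw [hpdef, Polynomial.eval_finset_sum, Finset.sum_eq_single i]
      · simp [hLself]
      · intro m _ hmi
        simp [hLne _ _ (fun hh => hmi (hIinj hh))]
      · intro hmem; exact absurd (mem_univ i) hmem
    have hpa : p.eval (x 0) = 0 := by
      rw [hpdef, Polynomial.eval_finset_sum]
      exact Finset.sum_eq_zero fun j _ => by simp [hLne _ _ (hIne0 j)]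
    have hpb : p.eval (x (Fin.last J)) = 0 := by
      rw [hpdef, Polynomial.eval_finset_sum]
      exact Finset.sum_eq_zero fun j _ => by simp [hLne _ _ (hInel j)]
    have hp2 : ∀ i, (derivative (derivative p)).eval (x (interiorIdx J i))
        = ∑ j, A i j * β j := by
      intro i
      rw [hpdef]
      rw [map_sum, map_sum]
      simp only [Polynomial.derivative_C_mul]
      rw [Polynomial.eval_finset_sum]
      refine Finset.sum_congr rfl fun j _ => ?_
      rw [Polynomial.eval_C_mul, hA i j]
      ring
    have hPdeg : (derivative (derivative p) * p).natDegree ≤ 2*J - 1 := by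
      refine (Polynomial.natDegree_mul_le).trans ?_
      have h1 : (derivative (derivative p)).natDegree ≤ J - 1 - 1 :=
        (Polynomial.natDegree_derivative_le _).trans
          (Nat.sub_le_sub_right ((Polynomial.natDegree_derivative_le _).trans
            (Nat.sub_le_sub_right hpdeg 1)) 1)
      omega
    have h1 := hexact _ hPdeg
    have h2 : ∑ k : Fin (J+1), α k * (derivative (derivative p) * p).eval (x k)
        = ∑ i, α (interiorIdx J i) * ((∑ j, A i j * β j) * β i) := by
      rw [cmn_sum_interior _
        (by simp [Polynomial.eval_mul, hpa])
        (by simp [Polynomial.eval_mul, hpb])]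
      exact Finset.sum_congr rfl fun i _ => by rw [Polynomial.eval_mul, hp2, hpev]
    have h3 := cmn_poly_ibp p p (x 0) (x (Fin.last J)) hpa hpb
    have hg : derivative p ≠ 0 := by
      intro hder
      obtain ⟨i0, hi0⟩ := Function.ne_iff.mp hβ
      obtain ⟨cc, hcc⟩ := Polynomial.natDegree_eq_zero.mp
        (Polynomial.natDegree_eq_zero_of_derivative_eq_zero hder)
      apply hi0
      rw [← hpev i0, ← hcc, Polynomial.eval_C]
      rw [← hcc, Polynomial.eval_C] at hpa
      exact hpa
    have h4 : 0 < ∫ t in (x 0)..(x (Fin.last J)),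
        (derivative p * derivative p).eval t := by
      have := cmn_poly_sq_pos (derivative p) hg (x 0) (x (Fin.last J)) hab
      simpa [Polynomial.eval_mul] using this
    have h5 : β ⬝ᵥ (Matrix.diagonal (fun i => α (interiorIdx J i)) * A).mulVec β
        = ∑ i, α (interiorIdx J i) * ((∑ j, A i j * β j) * β i) := by
      simp only [dotProduct, mulVec, Matrix.diagonal_mul, Finset.mul_sum]
      refine Finset.sum_congr rfl fun i _ => ?_
      rw [Finset.sum_mul, Finset.mul_sum]
      exact Finset.sum_congr rfl fun j _ => by ring
    rw [h5, ← h2, ← h1, h3]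
    linarith
  -- Part 2 setup
  set sq : Fin (J-1) → ℝ := fun i => Real.sqrt (α (interiorIdx J i)) with hsqdef
  have hs0 : ∀ i, sq i ≠ 0 := fun i => ne_of_gt (Real.sqrt_pos.mpr (hα _))
  have hss : ∀ i, sq i * sq i = α (interiorIdx J i) := fun i =>
    Real.mul_self_sqrt (hα _).le
  have hDinv : (Matrix.diagonal sq)⁻¹ = Matrix.diagonal (fun i => (sq i)⁻¹) := by
    apply Matrix.inv_eq_right_inv
    rw [Matrix.diagonal_mul_diagonal,
      show (fun i => sq i * (sq i)⁻¹) = fun _ => (1:ℝ) from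
        funext fun i => mul_inv_cancel₀ (hs0 i), Matrix.diagonal_one]
  have hSentry : ∀ i j, (Matrix.diagonal sq * A * (Matrix.diagonal sq)⁻¹) i j
      = sq i * A i j * (sq j)⁻¹ := by
    intro i j; rw [hDinv, Matrix.mul_diagonal, Matrix.diagonal_mul]
  have hsymmS : (Matrix.diagonal sq * A * (Matrix.diagonal sq)⁻¹).IsSymm := by
    refine Matrix.ext fun i j => ?_
    rw [Matrix.transpose_apply, hSentry, hSentry]
    have h := hsym i j
    rw [← hss i, ← hss j] at h
    field_simp [hs0 i, hs0 j]
    linear_combination -h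
  have hposS : (-(Matrix.diagonal sq * A * (Matrix.diagonal sq)⁻¹)).PosDef := by
    rw [Matrix.posDef_iff_dotProduct_mulVec]
    constructor
    · refine Matrix.ext fun i j => ?_
      rw [Matrix.conjTranspose_apply, Matrix.neg_apply, Matrix.neg_apply, star_trivial]
      have h := congrFun (congrFun hsymmS i) j
      rw [Matrix.transpose_apply] at h
      rw [h]
    · intro γ hγ
      set β : Fin (J-1) → ℝ := fun i => (sq i)⁻¹ * γ i with hβdef
      have hβ0 : β ≠ 0 := by
        intro h0
        apply hγ
        funext i
        have h1 := congrFun h0 i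
        simp only [hβdef, Pi.zero_apply] at h1
        rcases mul_eq_zero.mp h1 with h2 | h2
        · exact absurd h2 (inv_ne_zero (hs0 i))
        · exact h2
      have hquad : γ ⬝ᵥ (Matrix.diagonal sq * A * (Matrix.diagonal sq)⁻¹).mulVec γ
          = β ⬝ᵥ (Matrix.diagonal (fun i => α (interiorIdx J i)) * A).mulVec β := by
        simp only [dotProduct, mulVec, Matrix.diagonal_mul]
        refine Finset.sum_congr rfl fun i _ => ?_
        rw [Finset.mul_sum, Finset.mul_sum]
        refine Finset.sum_congr rfl fun j _ => ?_
        rw [hSentry i j]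
        simp only [hβdef]
        rw [← hss i]
        field_simp [hs0 i, hs0 j]
      have hneg := part1 β hβ0
      have hst : star γ = γ := funext fun i => star_trivial _
      rw [hst, Matrix.neg_mulVec, dotProduct_neg]
      linarith [hquad]
  refine ⟨part1, ⟨hsymmS, hposS⟩, ?_⟩
  -- Part 3: spectrum
  intro μ hμ
  rw [spectrum.mem_iff] at hμ
  rw [Algebra.algebraMap_eq_smul_one] at hμ
  have hdet : (μ • (1 : Matrix (Fin (J-1)) (Fin (J-1)) ℂ) - A.map Complex.ofReal).det = 0 := by
    by_contra hne
    exact hμ ((Matrix.isUnit_iff_isUnit_det _).mpr (isUnit_iff_ne_zero.mpr hne))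
  obtain ⟨v, hv0, hveq⟩ := Matrix.exists_mulVec_eq_zero_iff.mpr hdet
  have heig : ∀ i, (∑ j, (A i j : ℂ) * v j) = μ * v i := by
    intro i
    have h := congrFun hveq i
    rw [Matrix.sub_mulVec, Matrix.smul_mulVec, Matrix.one_mulVec] at h
    have h2 : (μ • v) i - ((A.map Complex.ofReal) *ᵥ v) i = 0 := by
      simpa [Pi.sub_apply] using h
    rw [sub_eq_zero] at h2
    calc ∑ j, (A i j : ℂ) * v j = ((A.map Complex.ofReal) *ᵥ v) i := by
          simp [mulVec, dotProduct, Matrix.map_apply]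
    _ = (μ • v) i := h2.symm
    _ = μ * v i := rfl
  set c : Fin (J-1) → Fin (J-1) → ℝ := fun i j => α (interiorIdx J i) * A i j with hcdef
  have hcsym : ∀ i j, c i j = c j i := fun i j => hsym i j
  have hcneg : ∀ β : Fin (J-1) → ℝ, β ≠ 0 → (∑ i, ∑ j, c i j * β i * β j) < 0 := by
    intro β hβ
    have h5 : β ⬝ᵥ (Matrix.diagonal (fun i => α (interiorIdx J i)) * A).mulVec β
        = ∑ i, ∑ j, c i j * β i * β j := by
      simp only [dotProduct, mulVec, Matrix.diagonal_mul, Finset.mul_sum]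
      exact Finset.sum_congr rfl fun i _ => Finset.sum_congr rfl fun j _ => by
        rw [hcdef]; ring
    rw [← h5]; exact part1 β hβ
  have hcle : ∀ β : Fin (J-1) → ℝ, (∑ i, ∑ j, c i j * β i * β j) ≤ 0 := by
    intro β
    rcases eq_or_ne β 0 with h | h
    · simp [h]
    · exact (hcneg β h).le
  set u : Fin (J-1) → ℝ := fun i => (v i).re with hudef
  set w : Fin (J-1) → ℝ := fun i => (v i).im with hwdef
  set r : ℝ := ∑ i, α (interiorIdx J i) * Complex.normSq (v i) with hrdef
  set q : ℂ := ∑ i, ∑ j, (c i j : ℂ) * ((starRingEnd ℂ) (v i) * v j) with hqdef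
  have hq1 : q = μ * (r : ℂ) := by
    rw [hqdef, hrdef]
    push_cast
    rw [Finset.mul_sum]
    refine Finset.sum_congr rfl fun i _ => ?_
    have hrow : ∑ j, (c i j : ℂ) * ((starRingEnd ℂ) (v i) * v j)
        = (α (interiorIdx J i) : ℂ) * (starRingEnd ℂ) (v i) * ∑ j, (A i j : ℂ) * v j := by
      rw [Finset.mul_sum]
      refine Finset.sum_congr rfl fun j _ => ?_
      rw [hcdef]; push_cast; ring
    rw [hrow, heig i]
    rw [show ((Complex.normSq (v i) : ℝ) : ℂ) = (starRingEnd ℂ) (v i) * v i from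
      Complex.normSq_eq_conj_mul_self]
    ring
  have hqim : q.im = 0 := by
    rw [hqdef]
    have hterm : ∀ i : Fin (J-1), ∀ j : Fin (J-1),
        ((c i j : ℂ) * ((starRingEnd ℂ) (v i) * v j)).im
        = c i j * (u i * w j) - c i j * (w i * u j) := by
      intro i j
      simp only [Complex.mul_im, Complex.mul_re, Complex.conj_re, Complex.conj_im,
        Complex.ofReal_re, Complex.ofReal_im, hudef, hwdef]
      ring
    simp only [Complex.im_sum, hterm]
    rw [show (∑ i, ∑ j, (c i j * (u i * w j) - c i j * (w i * u j)))
        = (∑ i, ∑ j, c i j * (u i * w j)) - ∑ i, ∑ j, c i j * (w i * u j) from by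
      rw [← Finset.sum_sub_distrib]
      exact Finset.sum_congr rfl fun i _ => Finset.sum_sub_distrib _ _]
    rw [sub_eq_zero, Finset.sum_comm]
    refine Finset.sum_congr rfl fun a _ => Finset.sum_congr rfl fun b _ => ?_
    rw [hcsym]; ring
  have hqre : q.re = (∑ i, ∑ j, c i j * u i * u j) + ∑ i, ∑ j, c i j * w i * w j := by
    rw [hqdef, ← Finset.sum_add_distrib, Complex.re_sum]
    refine Finset.sum_congr rfl fun i _ => ?_
    rw [Complex.re_sum, ← Finset.sum_add_distrib]
    refine Finset.sum_congr rfl fun j _ => ?_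
    simp only [Complex.mul_re, Complex.mul_im, Complex.conj_re, Complex.conj_im,
      Complex.ofReal_re, Complex.ofReal_im, hudef, hwdef]
    ring
  obtain ⟨i0, hi0⟩ : ∃ i, v i ≠ 0 := by
    by_contra hno
    push_neg at hno
    exact hv0 (funext fun i => hno i)
  have huw : u ≠ 0 ∨ w ≠ 0 := by
    by_contra hno
    push_neg at hno
    apply hi0
    apply Complex.ext
    · have := congrFun hno.1 i0
      simpa [hudef] using this
    · have := congrFun hno.2 i0
      simpa [hwdef] using this
  have hqre_neg : q.re < 0 := by
    rw [hqre]
    rcases huw with h | h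
    · have h1 := hcneg u h
      have h2 := hcle w
      linarith
    · have h1 := hcle u
      have h2 := hcneg w h
      linarith
  have hrpos : 0 < r := by
    rw [hrdef]
    refine Finset.sum_pos' (fun i _ => mul_nonneg (hα _).le (Complex.normSq_nonneg _))
      ⟨i0, mem_univ _, mul_pos (hα _) (Complex.normSq_pos.mpr hi0)⟩
  have him := congrArg Complex.im hq1
  rw [hqim] at him
  simp only [Complex.mul_im, Complex.ofReal_re, Complex.ofReal_im, mul_zero, zero_add] at him
  have hre := congrArg Complex.re hq1
  simp only [Complex.mul_re, Complex.ofReal_re, Complex.ofReal_im, mul_zero, sub_zero] at hre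
  have hμim : μ.im = 0 := by
    rcases mul_eq_zero.mp him.symm with h | h
    · exact h
    · exact absurd h (ne_of_gt hrpos)
  refine ⟨hμim, ?_⟩
  nlinarith [hqre_neg, hrpos, hre]
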